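/- arXiv:1204.3602 — 3 statements merged into one kernel-verified Lean document; each statement's English description precedes it below -/
import Mathlib

section
/- In the quantum Weyl algebra D_q at a primitive p-th root of unity q (p prime), the elements x^p and δ^p are central: [δ, x^p] = [δ^p, x] = [δ^p, x^p] = 0. -/
noncomputable section

/-- The quantum integer `[n] = 1 + q + ⋯ + q^(n-1)`. -/
def qint {R : Type} [CommRing R] (q : R) (n : ℕ) : R := ∑ k ∈ Finset.range n, q ^ k

/-- The defining relation `δx = q·xδ + 1` of the quantum Weyl algebra
(generator `0` is `x`, generator `1` is `δ`). -/
inductive WeylRel (R : Type) [CommRing R] (q : R) :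
    FreeAlgebra R (Fin 2) → FreeAlgebra R (Fin 2) → Prop
  | rel : WeylRel R q (FreeAlgebra.ι R 1 * FreeAlgebra.ι R 0)
      (q • (FreeAlgebra.ι R 0 * FreeAlgebra.ι R 1) + 1)

/-- The quantum Weyl algebra `D_q = R⟨x,δ⟩/(δx - qxδ - 1)`. -/
def Weyl (R : Type) [CommRing R] (q : R) := RingQuot (WeylRel R q)

instance (R : Type) [CommRing R] (q : R) : Ring (Weyl R q) :=
  inferInstanceAs (Ring (RingQuot _))

instance (R : Type) [CommRing R] (q : R) : Algebra R (Weyl R q) :=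
  inferInstanceAs (Algebra R (RingQuot _))

/-- The generator `x` of the quantum Weyl algebra. -/
def Wx (R : Type) [CommRing R] (q : R) : Weyl R q :=
  RingQuot.mkAlgHom R (WeylRel R q) (FreeAlgebra.ι R 0)

/-- The generator `δ` of the quantum Weyl algebra. -/
def Wd (R : Type) [CommRing R] (q : R) : Weyl R q :=
  RingQuot.mkAlgHom R (WeylRel R q) (FreeAlgebra.ι R 1)

lemma weyl_rel (R : Type) [CommRing R] (q : R) :
    Wd R q * Wx R q = q • (Wx R q * Wd R q) + 1 := by
  have h := RingQuot.mkAlgHom_rel R (WeylRel.rel (R := R) (q := q))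
  simp only [map_mul, map_add, map_smul, map_one] at h
  exact h

lemma weyl_dx_pow (R : Type) [CommRing R] (q : R) (n : ℕ) :
    Wd R q * Wx R q ^ (n + 1)
      = q ^ (n + 1) • (Wx R q ^ (n + 1) * Wd R q) + qint q (n + 1) • Wx R q ^ n := by
  induction n with
  | zero => simpa [qint] using weyl_rel R q
  | succ n ih =>
    have : Wd R q * Wx R q ^ (n + 2) = (Wd R q * Wx R q ^ (n + 1)) * Wx R q := by
      rw [mul_assoc, ← pow_succ]
    rw [this, ih, add_mul, smul_mul_assoc, smul_mul_assoc, mul_assoc, weyl_rel R q,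
      mul_add, mul_one, mul_smul_comm, smul_add, smul_smul, ← mul_assoc, ← pow_succ,
      ← pow_succ, ← pow_succ]
    have hq : qint q (n + 2) = qint q (n + 1) + q ^ (n + 1) := by
      simp [qint, Finset.sum_range_succ]
    rw [hq]
    module

lemma weyl_pow_dx (R : Type) [CommRing R] (q : R) (n : ℕ) :
    Wd R q ^ (n + 1) * Wx R q
      = q ^ (n + 1) • (Wx R q * Wd R q ^ (n + 1)) + qint q (n + 1) • Wd R q ^ n := by
  induction n with
  | zero => simpa [qint] using weyl_rel R q
  | succ n ih =>
    have : Wd R q ^ (n + 2) * Wx R q = Wd R q * (Wd R q ^ (n + 1) * Wx R q) := by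
      rw [← mul_assoc, ← pow_succ']
    rw [this, ih, mul_add, mul_smul_comm, mul_smul_comm, ← mul_assoc, weyl_rel R q,
      add_mul, one_mul, smul_mul_assoc, smul_add, smul_smul, mul_assoc, ← pow_succ',
      ← pow_succ']
    have hq : qint q (n + 2) = qint q (n + 1) + q ^ (n + 1) := by
      simp [qint, Finset.sum_range_succ]
    rw [hq]
    module

/-- `x^p` and `δ^p` are central in `D_q`: `[δ, x^p] = [δ^p, x] = [δ^p, x^p] = 0`. -/
theorem stmt8 (p : ℕ) (hp : p.Prime) (R : Type) [CommRing R] [IsDomain R] [CharZero R]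
    (q : R) (hq : IsPrimitiveRoot q p) (hgen : Algebra.adjoin ℤ ({q} : Set R) = ⊤) :
    Wd R q * Wx R q ^ p - Wx R q ^ p * Wd R q = 0 ∧
      Wd R q ^ p * Wx R q - Wx R q * Wd R q ^ p = 0 ∧
      Wd R q ^ p * Wx R q ^ p - Wx R q ^ p * Wd R q ^ p = 0 := by
  obtain ⟨n, rfl⟩ : ∃ n, p = n + 1 := ⟨p - 1, (Nat.succ_pred_eq_of_pos hp.pos).symm⟩
  have hqp : q ^ (n + 1) = 1 := hq.pow_eq_one
  have hqne : q ≠ 1 := hq.ne_one hp.one_lt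
  have hqint : qint q (n + 1) = 0 := by
    have h : qint q (n + 1) * (q - 1) = q ^ (n + 1) - 1 := geom_sum_mul q (n + 1)
    rw [hqp, sub_self] at h
    rcases mul_eq_zero.mp h with h' | h'
    · exact h'
    · exact absurd (sub_eq_zero.mp h') hqne
  have h1 : Wd R q * Wx R q ^ (n + 1) - Wx R q ^ (n + 1) * Wd R q = 0 := by
    rw [weyl_dx_pow, hqp, hqint, one_smul, zero_smul, add_zero, sub_self]
  have h2 : Wd R q ^ (n + 1) * Wx R q - Wx R q * Wd R q ^ (n + 1) = 0 := by
    rw [weyl_pow_dx, hqp, hqint, one_smul, zero_smul, add_zero, sub_self]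
  refine ⟨h1, h2, ?_⟩
  have hc : Commute (Wd R q) (Wx R q ^ (n + 1)) := sub_eq_zero.mp h1
  have := (hc.pow_left (n + 1))
  rw [sub_eq_zero]
  exact this
end
end

section
/- The center of the quantum Weyl algebra D_q (q a primitive p-th root of unity, p prime) is exactly the commutative polynomial subalgebra R[x^p, δ^p]: the canonical map R[x^p, δ^p] → D_q is injective with image the center Z(D_q). -/
noncomputable section

/- `R`, a characteristic-zero integral domain generated over `ℤ` by a primitive
`p`-th root of unity `q`, is (up to isomorphism) the ring `ℤ[q] ⊂ ℚ̄`. -/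

namespace WeylAux

variable {R : Type} [CommRing R] (q : R)

lemma qint_zero : qint q 0 = 0 := by simp [qint]

lemma qint_succ (n : ℕ) : qint q (n + 1) = 1 + q * qint q n := by
  simp [qint, Finset.sum_range_succ', Finset.mul_sum, pow_succ, mul_comm, add_comm]

lemma qint_succ' (n : ℕ) : qint q (n + 1) = qint q n + q ^ n := by
  simp [qint, Finset.sum_range_succ]

/-- The standard module: basis `e (i,j)` corresponds to `x^i δ^j`. -/
abbrev M (R : Type) [CommRing R] : Type := (ℕ × ℕ) →₀ R

/-- Left multiplication by `x`. -/
def Xop : M R →ₗ[R] M R :=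
  Finsupp.lift _ R _ fun ij => Finsupp.single (ij.1 + 1, ij.2) 1

/-- Left multiplication by `δ`. -/
def Dop : M R →ₗ[R] M R :=
  Finsupp.lift _ R _ fun ij =>
    q ^ ij.1 • Finsupp.single (ij.1, ij.2 + 1) 1 + qint q ij.1 • Finsupp.single (ij.1 - 1, ij.2) 1

@[simp] lemma Xop_single (i j : ℕ) (c : R) :
    Xop (Finsupp.single (i, j) c) = Finsupp.single (i + 1, j) c := by
  simp [Xop, Finsupp.lift_apply, Finsupp.sum_single_index, Finsupp.smul_single]

@[simp] lemma Dop_single (i j : ℕ) (c : R) :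
    Dop q (Finsupp.single (i, j) c) =
      Finsupp.single (i, j + 1) (q ^ i * c) + Finsupp.single (i - 1, j) (qint q i * c) := by
  simp [Dop, Finsupp.lift_apply, Finsupp.sum_single_index, smul_add, Finsupp.smul_single,
    mul_comm]

lemma rel_End : (Dop q : Module.End R (M R)) * Xop = q • ((Xop : Module.End R (M R)) * Dop q) + 1 := by
  apply Finsupp.lhom_ext
  rintro ⟨i, j⟩ c
  simp only [Module.End.mul_apply, LinearMap.add_apply, LinearMap.smul_apply, Module.End.one_apply,
    Xop_single, Dop_single, map_add, Nat.add_sub_cancel, smul_add, Finsupp.smul_single,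
    smul_eq_mul, qint_succ]
  cases i with
  | zero =>
      ext t
      simp only [qint_zero, Finsupp.add_apply, Finsupp.single_apply]
      split_ifs <;> ring
  | succ i =>
      simp only [Nat.add_sub_cancel]
      ext t
      simp only [Finsupp.add_apply, Finsupp.single_apply]
      split_ifs <;> ring

/-- The representation of the Weyl algebra on `M R`. -/
def rep : Weyl R q →ₐ[R] Module.End R (M R) :=
  RingQuot.liftAlgHom R ⟨FreeAlgebra.lift R ![Xop, Dop q], by
    rintro _ _ ⟨⟩
    simp only [map_mul, map_add, map_smul, map_one, FreeAlgebra.lift_ι_apply]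
    exact rel_End q⟩

@[simp] lemma rep_Wx : rep q (Wx R q) = (Xop : Module.End R (M R)) := by
  have := RingQuot.liftAlgHom_mkAlgHom_apply R (B := Module.End R (M R))
    (FreeAlgebra.lift R ![Xop, Dop q]) (s := WeylRel R q)
    (by rintro _ _ ⟨⟩
        simp only [map_mul, map_add, map_smul, map_one, FreeAlgebra.lift_ι_apply]
        exact rel_End q) (FreeAlgebra.ι R 0)
  rw [Wx, rep]
  exact this.trans (by simp)

@[simp] lemma rep_Wd : rep q (Wd R q) = (Dop q : Module.End R (M R)) := by
  have := RingQuot.liftAlgHom_mkAlgHom_apply R (B := Module.End R (M R))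
    (FreeAlgebra.lift R ![Xop, Dop q]) (s := WeylRel R q)
    (by rintro _ _ ⟨⟩
        simp only [map_mul, map_add, map_smul, map_one, FreeAlgebra.lift_ι_apply]
        exact rel_End q) (FreeAlgebra.ι R 1)
  rw [Wd, rep]
  exact this.trans (by simp)

/-- Extraction of the coefficient finsupp. -/
def coeffs : Weyl R q →ₗ[R] M R where
  toFun P := rep q P (Finsupp.single (0, 0) 1)
  map_add' P Q := by simp only [map_add, LinearMap.add_apply]
  map_smul' c P := by simp only [map_smul, LinearMap.smul_apply, RingHom.id_apply]

lemma coeffs_apply (P : Weyl R q) : coeffs q P = rep q P (Finsupp.single (0, 0) 1) := rfl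

/-- The monomial `x^i δ^j`. -/
def mon (i j : ℕ) : Weyl R q := Wx R q ^ i * Wd R q ^ j

lemma rep_Wd_pow_single (j : ℕ) : rep q (Wd R q ^ j) (Finsupp.single (0, 0) 1)
    = Finsupp.single (0, j) 1 := by
  induction j with
  | zero => simp
  | succ j ih =>
      rw [pow_succ', map_mul, Module.End.mul_apply, ih, rep_Wd, Dop_single]
      simp [qint_zero]

lemma rep_Wx_pow (i : ℕ) (u v : ℕ) (c : R) :
    rep q (Wx R q ^ i) (Finsupp.single (u, v) c) = Finsupp.single (u + i, v) c := by
  induction i with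
  | zero => simp
  | succ i ih =>
      rw [pow_succ', map_mul, Module.End.mul_apply, ih, rep_Wx, Xop_single, add_assoc]

@[simp] lemma coeffs_mon (i j : ℕ) : coeffs q (mon q i j) = Finsupp.single (i, j) 1 := by
  rw [coeffs_apply, mon, map_mul, Module.End.mul_apply, rep_Wd_pow_single, rep_Wx_pow]
  simp

lemma Wrel : Wd R q * Wx R q = q • (Wx R q * Wd R q) + 1 := by
  have h := RingQuot.mkAlgHom_rel R (WeylRel.rel (R := R) (q := q))
  simp only [map_mul, map_add, map_smul, map_one] at h
  exact h

/-- `δ x^n = q^n x^n δ + [n] x^(n-1)`. -/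
lemma comm1 (n : ℕ) :
    Wd R q * Wx R q ^ n = q ^ n • (Wx R q ^ n * Wd R q) + qint q n • Wx R q ^ (n - 1) := by
  induction n with
  | zero => simp [qint_zero]
  | succ n ih =>
      rw [pow_succ', ← mul_assoc, Wrel, add_mul, one_mul, smul_mul_assoc, mul_assoc, ih,
        mul_add, mul_smul_comm, mul_smul_comm, qint_succ, ← mul_assoc, ← pow_succ']
      cases n with
      | zero =>
          simp only [qint_zero, Nat.sub_self, pow_zero, mul_zero, zero_smul, smul_zero, pow_one]
          module
      | succ m =>
          rw [Nat.add_sub_cancel, Nat.add_sub_cancel, ← pow_succ']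
          module

/-- `δ^n x = q^n x δ^n + [n] δ^(n-1)`. -/
lemma comm2 (n : ℕ) :
    Wd R q ^ n * Wx R q = q ^ n • (Wx R q * Wd R q ^ n) + qint q n • Wd R q ^ (n - 1) := by
  induction n with
  | zero => simp [qint_zero]
  | succ n ih =>
      rw [pow_succ', mul_assoc, ih, mul_add, mul_smul_comm, mul_smul_comm, ← mul_assoc, Wrel,
        add_mul, one_mul, smul_mul_assoc, mul_assoc, ← pow_succ', qint_succ']
      cases n with
      | zero =>
          simp only [qint_zero, Nat.sub_self, pow_zero, mul_zero, zero_smul, smul_zero, pow_one]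
          module
      | succ m =>
          rw [Nat.add_sub_cancel, Nat.add_sub_cancel, ← pow_succ']
          module

/-- `(x^i δ^j)·x = q^j x^(i+1) δ^j + [j] x^i δ^(j-1)`. -/
lemma mon_mul_Wx (i j : ℕ) :
    mon q i j * Wx R q = q ^ j • mon q (i + 1) j + qint q j • mon q i (j - 1) := by
  rw [mon, mul_assoc, comm2]
  rw [mul_add, mul_smul_comm, mul_smul_comm, ← mul_assoc, ← pow_succ]
  rfl

lemma mon_mul_Wd (i j : ℕ) : mon q i j * Wd R q = mon q i (j + 1) := by
  rw [mon, mon, mul_assoc, ← pow_succ]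

def monSpan : Submodule R (Weyl R q) :=
  Submodule.span R (Set.range fun ij : ℕ × ℕ => mon q ij.1 ij.2)

lemma mon_mem (i j : ℕ) : mon q i j ∈ monSpan q :=
  Submodule.subset_span ⟨(i, j), rfl⟩

lemma mon_mul_mon_mem (k : ℕ) : ∀ i j l : ℕ, mon q i j * mon q k l ∈ monSpan q := by
  induction k with
  | zero =>
      intro i j l
      have : mon q i j * mon q 0 l = mon q i (j + l) := by
        rw [mon, mon, mon, pow_zero, one_mul, mul_assoc, ← pow_add]
      rw [this]; exact mon_mem q _ _
  | succ k ih =>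
      intro i j l
      have h1 : mon q (k + 1) l = Wx R q * mon q k l := by
        rw [mon, mon, pow_succ', mul_assoc]
      rw [h1, ← mul_assoc, mon_mul_Wx, add_mul, smul_mul_assoc, smul_mul_assoc]
      exact Submodule.add_mem _ (Submodule.smul_mem _ _ (ih _ _ _))
        (Submodule.smul_mem _ _ (ih _ _ _))

lemma monSpan_mul {a b : Weyl R q} (ha : a ∈ monSpan q) (hb : b ∈ monSpan q) :
    a * b ∈ monSpan q := by
  induction ha using Submodule.span_induction with
  | mem x hx =>
      obtain ⟨⟨i, j⟩, rfl⟩ := hx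
      induction hb using Submodule.span_induction with
      | mem y hy =>
          obtain ⟨⟨k, l⟩, rfl⟩ := hy
          exact mon_mul_mon_mem q k i j l
      | zero => simp only [mul_zero]; exact Submodule.zero_mem _
      | add y z _ _ hy hz => rw [mul_add]; exact Submodule.add_mem _ hy hz
      | smul c y _ hy => rw [mul_smul_comm]; exact Submodule.smul_mem _ _ hy
  | zero => simp only [zero_mul]; exact Submodule.zero_mem _
  | add y z _ _ hy hz => rw [add_mul]; exact Submodule.add_mem _ hy hz
  | smul c y _ hy => rw [smul_mul_assoc]; exact Submodule.smul_mem _ _ hy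

lemma mem_adjoin_gens (w : Weyl R q) :
    w ∈ Algebra.adjoin R ({Wx R q, Wd R q} : Set (Weyl R q)) := by
  obtain ⟨a, rfl⟩ := RingQuot.mkAlgHom_surjective R (WeylRel R q) w
  induction a using FreeAlgebra.induction with
  | grade0 r =>
      rw [AlgHom.commutes]
      exact Subalgebra.algebraMap_mem _ r
  | grade1 i =>
      fin_cases i
      · exact Algebra.subset_adjoin (Or.inl rfl)
      · exact Algebra.subset_adjoin (Or.inr rfl)
  | mul a b ha hb => rw [map_mul]; exact mul_mem ha hb
  | add a b ha hb => rw [map_add]; exact add_mem ha hb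

lemma adjoin_gens : Algebra.adjoin R ({Wx R q, Wd R q} : Set (Weyl R q)) = ⊤ :=
  eq_top_iff.mpr fun w _ => mem_adjoin_gens q w

lemma mem_monSpan (w : Weyl R q) : w ∈ monSpan q := by
  have hw : w ∈ Algebra.adjoin R ({Wx R q, Wd R q} : Set (Weyl R q)) := by
    rw [adjoin_gens]; trivial
  induction hw using Algebra.adjoin_induction with
  | mem x hx =>
      rcases hx with rfl | rfl
      · have : Wx R q = mon q 1 0 := by rw [mon]; simp
        rw [this]; exact mon_mem q 1 0
      · have : Wd R q = mon q 0 1 := by rw [mon]; simp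
        rw [this]; exact mon_mem q 0 1
  | algebraMap r =>
      have : algebraMap R (Weyl R q) r = r • mon q 0 0 := by
        rw [mon]; simp [Algebra.smul_def]
      rw [this]; exact Submodule.smul_mem _ _ (mon_mem q 0 0)
  | add a b _ _ ha hb => exact Submodule.add_mem _ ha hb
  | mul a b _ _ ha hb => exact monSpan_mul q ha hb

lemma monSpan_eq_top : monSpan q = ⊤ :=
  eq_top_iff.mpr fun w _ => mem_monSpan q w

/-- Right multiplication by `x`, on coefficients. -/
def Xop' : M R →ₗ[R] M R :=
  Finsupp.lift _ R _ fun ij =>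
    q ^ ij.2 • Finsupp.single (ij.1 + 1, ij.2) 1 + qint q ij.2 • Finsupp.single (ij.1, ij.2 - 1) 1

/-- Right multiplication by `δ`, on coefficients. -/
def Dop' : M R →ₗ[R] M R :=
  Finsupp.lift _ R _ fun ij => Finsupp.single (ij.1, ij.2 + 1) 1

@[simp] lemma Xop'_single (i j : ℕ) (c : R) :
    Xop' q (Finsupp.single (i, j) c) =
      Finsupp.single (i + 1, j) (q ^ j * c) + Finsupp.single (i, j - 1) (qint q j * c) := by
  simp [Xop', Finsupp.lift_apply, Finsupp.sum_single_index, smul_add, Finsupp.smul_single,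
    mul_comm]

@[simp] lemma Dop'_single (i j : ℕ) (c : R) :
    Dop' (Finsupp.single (i, j) c) = Finsupp.single (i, j + 1) c := by
  simp [Dop', Finsupp.lift_apply, Finsupp.sum_single_index, Finsupp.smul_single]

lemma coeffs_Wx_mul (P : Weyl R q) : coeffs q (Wx R q * P) = Xop (coeffs q P) := by
  rw [coeffs_apply, map_mul, Module.End.mul_apply, rep_Wx, coeffs_apply]

lemma coeffs_Wd_mul (P : Weyl R q) : coeffs q (Wd R q * P) = Dop q (coeffs q P) := by
  rw [coeffs_apply, map_mul, Module.End.mul_apply, rep_Wd, coeffs_apply]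

lemma coeffs_mul_Wx (P : Weyl R q) : coeffs q (P * Wx R q) = Xop' q (coeffs q P) := by
  have h : (coeffs q).comp (LinearMap.mulRight R (Wx R q)) = (Xop' q).comp (coeffs q) := by
    apply LinearMap.ext_on (monSpan_eq_top q)
    rintro _ ⟨⟨i, j⟩, rfl⟩
    simp only [LinearMap.comp_apply, LinearMap.mulRight_apply, coeffs_mon]
    rw [mon_mul_Wx, map_add, map_smul, map_smul, coeffs_mon, coeffs_mon, Xop'_single]
    rw [Finsupp.smul_single, Finsupp.smul_single]
    simp [mul_one, smul_eq_mul]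
  exact LinearMap.congr_fun h P

lemma coeffs_mul_Wd (P : Weyl R q) : coeffs q (P * Wd R q) = Dop' (coeffs q P) := by
  have h : (coeffs q).comp (LinearMap.mulRight R (Wd R q)) = Dop'.comp (coeffs q) := by
    apply LinearMap.ext_on (monSpan_eq_top q)
    rintro _ ⟨⟨i, j⟩, rfl⟩
    simp only [LinearMap.comp_apply, LinearMap.mulRight_apply, coeffs_mon]
    rw [mon_mul_Wd, coeffs_mon, Dop'_single]
  exact LinearMap.congr_fun h P

lemma Xop_apply_succ (b : M R) (u v : ℕ) : (Xop b) (u + 1, v) = b (u, v) := by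
  induction b using Finsupp.induction_linear with
  | zero => simp
  | add f g hf hg => simp [hf, hg]
  | single a c =>
      obtain ⟨i, j⟩ := a
      rw [Xop_single]
      simp only [Finsupp.single_apply, Prod.mk.injEq]
      split_ifs <;> first | rfl | (exfalso; omega) | (simp_all only [false_and])

lemma Xop_apply_zero (b : M R) (v : ℕ) : (Xop b) (0, v) = 0 := by
  induction b using Finsupp.induction_linear with
  | zero => simp
  | add f g hf hg => simp [hf, hg]
  | single a c =>
      obtain ⟨i, j⟩ := a
      rw [Xop_single]
      simp only [Finsupp.single_apply, Prod.mk.injEq]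
      split_ifs <;> first | rfl | (exfalso; omega) | (simp_all only [false_and])

lemma Dop_apply (b : M R) (u v : ℕ) :
    (Dop q b) (u, v + 1) = q ^ u * b (u, v) + qint q (u + 1) * b (u + 1, v + 1) := by
  induction b using Finsupp.induction_linear with
  | zero => simp
  | add f g hf hg => simp only [map_add, Finsupp.add_apply, hf, hg]; ring
  | single a c =>
      obtain ⟨i, j⟩ := a
      rw [Dop_single]
      rcases i with _ | i
      all_goals (
        simp only [Finsupp.add_apply, Finsupp.single_apply, Prod.mk.injEq, qint_zero,
          Nat.zero_sub, Nat.succ_sub_one, Nat.succ_ne_zero, false_and, and_false, if_false,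
          zero_mul, mul_zero, zero_add, add_zero, pow_zero, one_mul, mul_one]
        split_ifs <;> (try (exfalso; omega)) <;> (try casesm* _ ∧ _) <;>
          (try subst_eqs) <;>
          first
            | rfl | ring1 | omega | (exact (‹False›).elim)
            | (simp only [qint_zero, pow_zero]; ring1))

lemma Xop'_apply_succ (b : M R) (u v : ℕ) :
    (Xop' q b) (u + 1, v) = q ^ v * b (u, v) + qint q (v + 1) * b (u + 1, v + 1) := by
  induction b using Finsupp.induction_linear with
  | zero => simp
  | add f g hf hg => simp only [map_add, Finsupp.add_apply, hf, hg]; ring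
  | single a c =>
      obtain ⟨i, j⟩ := a
      rw [Xop'_single]
      rcases j with _ | j
      all_goals (
        simp only [Finsupp.add_apply, Finsupp.single_apply, Prod.mk.injEq, qint_zero,
          Nat.zero_sub, Nat.succ_sub_one, Nat.succ_ne_zero, false_and, and_false, if_false,
          zero_mul, mul_zero, zero_add, add_zero, pow_zero, one_mul, mul_one]
        split_ifs <;> (try (exfalso; omega)) <;> (try casesm* _ ∧ _) <;>
          (try subst_eqs) <;>
          first
            | rfl | ring1 | omega | (exact (‹False›).elim)
            | (simp only [qint_zero, pow_zero]; ring1))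

lemma Xop'_apply_zero (b : M R) (v : ℕ) :
    (Xop' q b) (0, v) = qint q (v + 1) * b (0, v + 1) := by
  induction b using Finsupp.induction_linear with
  | zero => simp
  | add f g hf hg => simp only [map_add, Finsupp.add_apply, hf, hg]; ring
  | single a c =>
      obtain ⟨i, j⟩ := a
      rw [Xop'_single]
      rcases j with _ | j
      all_goals (
        simp only [Finsupp.add_apply, Finsupp.single_apply, Prod.mk.injEq, qint_zero,
          Nat.zero_sub, Nat.succ_sub_one, Nat.succ_ne_zero, false_and, and_false, if_false,
          zero_mul, mul_zero, zero_add, add_zero, pow_zero, one_mul, mul_one]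
        split_ifs <;> (try (exfalso; omega)) <;> (try casesm* _ ∧ _) <;>
          (try subst_eqs) <;>
          first
            | rfl | ring1 | omega | (exact (‹False›).elim)
            | (simp only [qint_zero, pow_zero]; ring1))

lemma Dop'_apply (b : M R) (u v : ℕ) : (Dop' b) (u, v + 1) = b (u, v) := by
  induction b using Finsupp.induction_linear with
  | zero => simp
  | add f g hf hg => simp [hf, hg]
  | single a c =>
      obtain ⟨i, j⟩ := a
      rw [Dop'_single]
      simp only [Finsupp.single_apply, Prod.mk.injEq]
      split_ifs <;> first | rfl | (exfalso; omega) | (simp_all only [false_and])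

lemma coeffs_sum_mon (c : M R) :
    coeffs q (c.sum fun ij r => r • mon q ij.1 ij.2) = c := by
  rw [map_finsuppSum]
  have h1 : ∀ ij : ℕ × ℕ, ∀ r : R,
      coeffs q (r • mon q ij.1 ij.2) = Finsupp.single ij r := by
    intro ij r
    rw [map_smul, coeffs_mon, Finsupp.smul_single, smul_eq_mul, mul_one]
  rw [Finsupp.sum_congr fun ij _ => h1 ij (c ij)]
  exact Finsupp.sum_single c

lemma coeffs_repr (w : Weyl R q) :
    w = (coeffs q w).sum fun ij c => c • mon q ij.1 ij.2 := by
  obtain ⟨c, hc⟩ := Finsupp.mem_span_range_iff_exists_finsupp.mp (mem_monSpan q w)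
  have h2 : coeffs q w = c := by rw [← hc, coeffs_sum_mon]
  rw [h2]
  exact hc.symm

lemma central_of_comm (z : Weyl R q) (h1 : Wx R q * z = z * Wx R q)
    (h2 : Wd R q * z = z * Wd R q) : z ∈ Subalgebra.center R (Weyl R q) := by
  rw [Subalgebra.mem_center_iff]
  intro g
  have hg := mem_adjoin_gens q g
  induction hg using Algebra.adjoin_induction with
  | mem x hx =>
      rcases hx with rfl | hx
      · exact h1
      · rw [Set.mem_singleton_iff] at hx; subst hx; exact h2
  | algebraMap r => exact Algebra.commutes r z
  | add x y _ _ hx hy => rw [add_mul, mul_add, hx, hy]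
  | mul x y _ _ hx hy => rw [mul_assoc, hy, ← mul_assoc, hx, mul_assoc]

section Domain

variable {p : ℕ} (hp : p.Prime) {R : Type} [CommRing R] [IsDomain R]
variable {q : R} (hq : IsPrimitiveRoot q p)

include hp hq

omit [IsDomain R] in
lemma q_ne_one : q ≠ 1 := hq.ne_one hp.one_lt

lemma qint_eq_zero_iff (n : ℕ) : qint q n = 0 ↔ p ∣ n := by
  have hg : qint q n * (q - 1) = q ^ n - 1 := geom_sum_mul q n
  have hq1 : q - 1 ≠ 0 := sub_ne_zero.mpr (q_ne_one hp hq)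
  constructor
  · intro h
    have : q ^ n = 1 := by
      have := hg.symm.trans (by rw [h, zero_mul])
      linear_combination this
    exact (hq.pow_eq_one_iff_dvd n).mp this
  · intro h
    have h1 : q ^ n = 1 := (hq.pow_eq_one_iff_dvd n).mpr h
    have : qint q n * (q - 1) = 0 := by rw [hg, h1, sub_self]
    rcases mul_eq_zero.mp this with h' | h'
    · exact h'
    · exact absurd h' hq1

/-- The diagonal relation: coefficients of a central element satisfy `(q^u - q^v)·a(u,v) = 0`. -/
lemma diag_rel {a : M R} (u v : ℕ)
    (hA : a (u, v) = q ^ v * a (u, v) + qint q (v + 1) * a (u + 1, v + 1))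
    (hB : q ^ u * a (u, v) + qint q (u + 1) * a (u + 1, v + 1) = a (u, v))
    (hne : a (u, v) ≠ 0) : q ^ u = q ^ v := by
  have hq1 : q - 1 ≠ 0 := sub_ne_zero.mpr (q_ne_one hp hq)
  have g1 : qint q (u + 1) * (q - 1) = q ^ (u + 1) - 1 := geom_sum_mul q (u + 1)
  have g2 : qint q (v + 1) * (q - 1) = q ^ (v + 1) - 1 := geom_sum_mul q (v + 1)
  -- combine the two relations
  have key : (q ^ u - q ^ v) * a (u, v) * (q - 1) = 0 := by
    linear_combination (q - 1) * qint q (u + 1) * hA + (q - 1) * qint q (v + 1) * hB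
      - (1 - q ^ v) * a (u, v) * g1 + (1 - q ^ u) * a (u, v) * g2
  rcases mul_eq_zero.mp key with h | h
  · rcases mul_eq_zero.mp h with h' | h'
    · exact sub_eq_zero.mp h'
    · exact absurd h' hne
  · exact absurd h hq1

lemma vanish_of_not_dvd_snd {a : M R}
    (hA : ∀ u v : ℕ, a (u, v) = q ^ v * a (u, v) + qint q (v + 1) * a (u + 1, v + 1))
    (hA0 : ∀ v : ℕ, (0 : R) = qint q (v + 1) * a (0, v + 1))
    (hB : ∀ u v : ℕ, q ^ u * a (u, v) + qint q (u + 1) * a (u + 1, v + 1) = a (u, v)) :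
    ∀ u v : ℕ, ¬ p ∣ v → a (u, v) = 0 := by
  intro u
  induction u with
  | zero =>
      intro v hv
      rcases v with _ | w
      · exact absurd (dvd_zero p) hv
      · by_contra hne
        have : qint q (w + 1) ≠ 0 := fun h => hv ((qint_eq_zero_iff hp hq _).mp h)
        exact hne (by
          have h0 := (hA0 w).symm
          rcases mul_eq_zero.mp h0 with h' | h'
          · exact absurd h' this
          · exact h')
  | succ u ih =>
      intro v hv
      by_contra hne
      rcases v with _ | w
      · exact absurd (dvd_zero p) hv
      · -- from hA at (u, w): (1 - q^w) a(u,w) = [w+1] a(u+1,w+1)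
        have hAuw := hA u w
        have hqv : qint q (w + 1 + 1 - 1) ≠ 0 := by
          rw [Nat.add_sub_cancel]
          exact fun h => hv ((qint_eq_zero_iff hp hq _).mp h)
        have hw1 : qint q (w + 1) ≠ 0 := by simpa using hqv
        have hprod : qint q (w + 1) * a (u + 1, w + 1) ≠ 0 := mul_ne_zero hw1 hne
        have haw : a (u, w) ≠ 0 := by
          intro h0
          rw [h0, mul_zero, zero_add] at hAuw
          exact hprod hAuw.symm
        have hqw : q ^ w ≠ 1 := by
          intro h1
          rw [h1, one_mul] at hAuw
          have : qint q (w + 1) * a (u + 1, w + 1) = 0 := by linear_combination hAuw.symm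
          exact hprod this
        have hpw : ¬ p ∣ w := fun h => hqw ((hq.pow_eq_one_iff_dvd w).mpr h)
        exact haw (ih w hpw)

lemma vanish_main {a : M R}
    (hA : ∀ u v : ℕ, a (u, v) = q ^ v * a (u, v) + qint q (v + 1) * a (u + 1, v + 1))
    (hA0 : ∀ v : ℕ, (0 : R) = qint q (v + 1) * a (0, v + 1))
    (hB : ∀ u v : ℕ, q ^ u * a (u, v) + qint q (u + 1) * a (u + 1, v + 1) = a (u, v)) :
    ∀ u v : ℕ, ¬ (p ∣ u ∧ p ∣ v) → a (u, v) = 0 := by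
  intro u v h
  by_contra hne
  have hd : q ^ u = q ^ v := diag_rel hp hq u v (hA u v) (hB u v) hne
  have hv : p ∣ v := by
    by_contra hv
    exact hne (vanish_of_not_dvd_snd hp hq hA hA0 hB u v hv)
  have hu : p ∣ u := by
    have : q ^ v = 1 := (hq.pow_eq_one_iff_dvd v).mpr hv
    exact (hq.pow_eq_one_iff_dvd u).mp (hd.trans this)
  exact h ⟨hu, hv⟩

lemma Wx_pow_p_central : Wx R q ^ p ∈ Subalgebra.center R (Weyl R q) := by
  apply central_of_comm
  · rw [← pow_succ', ← pow_succ]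
  · rw [comm1, (hq.pow_eq_one_iff_dvd p).mpr dvd_rfl, one_smul,
      (qint_eq_zero_iff hp hq p).mpr dvd_rfl, zero_smul, add_zero]

lemma Wd_pow_p_central : Wd R q ^ p ∈ Subalgebra.center R (Weyl R q) := by
  apply central_of_comm
  · have h : Wd R q ^ p * Wx R q = Wx R q * Wd R q ^ p := by
      rw [comm2, (hq.pow_eq_one_iff_dvd p).mpr dvd_rfl, one_smul,
        (qint_eq_zero_iff hp hq p).mpr dvd_rfl, zero_smul, add_zero]
    exact h.symm
  · rw [← pow_succ', ← pow_succ]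

lemma coeffs_rep_sum (b : M R) :
    coeffs q (b.sum fun ij c =>
        algebraMap R (Weyl R q) c * Wx R q ^ (p * ij.1) * Wd R q ^ (p * ij.2))
      = Finsupp.mapDomain (fun ij : ℕ × ℕ => (p * ij.1, p * ij.2)) b := by
  rw [Finsupp.mapDomain, map_finsuppSum]
  apply Finsupp.sum_congr
  intro ij _
  rw [mul_assoc, ← Algebra.smul_def, map_smul]
  rw [show Wx R q ^ (p * ij.1) * Wd R q ^ (p * ij.2) = mon q (p * ij.1) (p * ij.2) from rfl]
  rw [coeffs_mon, Finsupp.smul_single, smul_eq_mul, mul_one]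

lemma rep_sum_eq (b : M R) :
    (b.sum fun ij c =>
        algebraMap R (Weyl R q) c * Wx R q ^ (p * ij.1) * Wd R q ^ (p * ij.2))
      = b.sum fun ij c => c • mon q (p * ij.1) (p * ij.2) := by
  apply Finsupp.sum_congr
  intro ij _
  rw [mon, mul_assoc, ← Algebra.smul_def]

end Domain

end WeylAux

open WeylAux

/-- The center of `D_q` is exactly `R[x^p, δ^p]`: an element is central iff it has a
(necessarily unique) representation as a polynomial in `x^p` and `δ^p`. -/
theorem stmt15 (p : ℕ) (hp : p.Prime) (R : Type) [CommRing R] [IsDomain R] [CharZero R]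
    (q : R) (hq : IsPrimitiveRoot q p) (hgen : Algebra.adjoin ℤ ({q} : Set R) = ⊤)
    (P : Weyl R q) :
    P ∈ Subalgebra.center R (Weyl R q) ↔
      ∃! a : ℕ × ℕ →₀ R,
        P = a.sum fun ij c =>
          algebraMap R (Weyl R q) c * Wx R q ^ (p * ij.1) * Wd R q ^ (p * ij.2) := by
  classical
  have hg : Function.Injective (fun ij : ℕ × ℕ => (p * ij.1, p * ij.2)) := by
    rintro ⟨i, j⟩ ⟨k, l⟩ h
    simp only [Prod.mk.injEq] at h
    exact Prod.ext (Nat.eq_of_mul_eq_mul_left hp.pos h.1) (Nat.eq_of_mul_eq_mul_left hp.pos h.2)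
  constructor
  · intro hP
    set a := coeffs q P with ha
    have hxc : Wx R q * P = P * Wx R q := Subalgebra.mem_center_iff.mp hP (Wx R q)
    have hdc : Wd R q * P = P * Wd R q := Subalgebra.mem_center_iff.mp hP (Wd R q)
    have hX : Xop a = Xop' q a := by
      rw [ha, ← coeffs_Wx_mul, ← coeffs_mul_Wx, hxc]
    have hD : Dop q a = Dop' a := by
      rw [ha, ← coeffs_Wd_mul, ← coeffs_mul_Wd, hdc]
    have hA : ∀ u v : ℕ, a (u, v) = q ^ v * a (u, v) + qint q (v + 1) * a (u + 1, v + 1) := by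
      intro u v
      have h := DFunLike.congr_fun hX (u + 1, v)
      rwa [Xop_apply_succ, Xop'_apply_succ] at h
    have hA0 : ∀ v : ℕ, (0 : R) = qint q (v + 1) * a (0, v + 1) := by
      intro v
      have h := DFunLike.congr_fun hX (0, v)
      rwa [Xop_apply_zero, Xop'_apply_zero] at h
    have hB : ∀ u v : ℕ, q ^ u * a (u, v) + qint q (u + 1) * a (u + 1, v + 1) = a (u, v) := by
      intro u v
      have h := DFunLike.congr_fun hD (u, v + 1)
      rwa [Dop_apply, Dop'_apply] at h
    have hvan := vanish_main hp hq hA hA0 hB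
    set b := Finsupp.comapDomain (fun ij : ℕ × ℕ => (p * ij.1, p * ij.2)) a hg.injOn with hb
    have hmap : Finsupp.mapDomain (fun ij : ℕ × ℕ => (p * ij.1, p * ij.2)) b = a := by
      ext t
      obtain ⟨u, v⟩ := t
      by_cases h : p ∣ u ∧ p ∣ v
      · obtain ⟨⟨i, rfl⟩, ⟨j, rfl⟩⟩ := h
        exact (Finsupp.mapDomain_apply hg b (i, j)).trans
          (Finsupp.comapDomain_apply _ _ _ (i, j))
      · rw [Finsupp.mapDomain_notin_range _ _ ?_, (hvan u v h).symm]
        rintro ⟨⟨i, j⟩, hij⟩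
        simp only [Prod.mk.injEq] at hij
        exact h ⟨⟨i, hij.1.symm⟩, ⟨j, hij.2.symm⟩⟩
    refine ⟨b, ?_, ?_⟩
    · calc P = a.sum fun ij c => c • mon q ij.1 ij.2 := by rw [ha]; exact coeffs_repr q P
        _ = (Finsupp.mapDomain (fun ij : ℕ × ℕ => (p * ij.1, p * ij.2)) b).sum
              (fun ij c => c • mon q ij.1 ij.2) := by rw [hmap]
        _ = b.sum fun ij c => c • mon q (p * ij.1) (p * ij.2) :=
              Finsupp.sum_mapDomain_index (fun uv => zero_smul R _)
                (fun uv c₁ c₂ => add_smul c₁ c₂ _)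
        _ = b.sum fun ij c =>
              algebraMap R (Weyl R q) c * Wx R q ^ (p * ij.1) * Wd R q ^ (p * ij.2) :=
              (rep_sum_eq hp hq b).symm
    · intro b' hb'
      apply Finsupp.mapDomain_injective hg
      rw [hmap, ha, hb', coeffs_rep_sum hp hq]
  · rintro ⟨b, hb, -⟩
    rw [hb]
    apply sum_mem
    intro ij _
    refine mul_mem (mul_mem (Subalgebra.algebraMap_mem _ _) ?_) ?_
    · rw [pow_mul]
      exact pow_mem (Wx_pow_p_central hp hq) _
    · rw [pow_mul]
      exact pow_mem (Wd_pow_p_central hp hq) _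
end
end

section
/- The centralizer of R[x] in the quantum Weyl algebra D_q (q a primitive p-th root of unity, p prime) is the subalgebra R[x, δ^p]: an element P ∈ D_q commutes with x if and only if P is a polynomial in x and δ^p. -/
noncomputable section

/- `R`, a characteristic-zero integral domain generated over `ℤ` by a primitive
`p`-th root of unity `q`, is (up to isomorphism) the ring `ℤ[q] ⊂ ℚ̄`. -/

namespace Stmt16

variable {R : Type} [CommRing R] (q : R)

lemma qint_zero : qint q 0 = 0 := by simp [qint]

lemma qint_succ (n : ℕ) : qint q (n + 1) = q * qint q n + 1 := by
  simp [qint, geom_sum_succ]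

lemma qint_mul_sub_one (n : ℕ) : qint q n * (q - 1) = q ^ n - 1 := geom_sum_mul q n

abbrev F (R : Type) [CommRing R] := (ℕ × ℕ) →₀ R

/-- `x` acting on normal-form monomials: `e (i,j) ↦ e (i+1, j)`. -/
def Xop : F R →ₗ[R] F R := Finsupp.lmapDomain R R (fun ij => (ij.1 + 1, ij.2))

/-- `δ` acting on normal-form monomials: `e (i,j) ↦ q^i e (i,j+1) + [i] e (i-1,j)`. -/
def Dop : F R →ₗ[R] F R :=
  Finsupp.lsum ℕ fun ij => LinearMap.id.smulRight
    (Finsupp.single (ij.1, ij.2 + 1) (q ^ ij.1) +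
      Finsupp.single (ij.1 - 1, ij.2) (qint q ij.1))

lemma Xop_single (ij : ℕ × ℕ) (c : R) :
    Xop (Finsupp.single ij c) = Finsupp.single (ij.1 + 1, ij.2) c := by
  simp [Xop, Finsupp.mapDomain_single]

lemma Dop_single (ij : ℕ × ℕ) (c : R) :
    Dop q (Finsupp.single ij c) =
      Finsupp.single (ij.1, ij.2 + 1) (c * q ^ ij.1) +
        Finsupp.single (ij.1 - 1, ij.2) (c * qint q ij.1) := by
  simp [Dop, smul_add, Finsupp.smul_single, smul_eq_mul]

lemma rel_end : (Dop q) * (Xop : F R →ₗ[R] F R) = q • (Xop * Dop q) + 1 := by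
  apply Finsupp.lhom_ext
  intro ij c
  obtain ⟨i, j⟩ := ij
  simp only [Module.End.mul_apply, LinearMap.add_apply, LinearMap.smul_apply, Module.End.one_apply,
    Xop_single, Dop_single, map_add, smul_add, Finsupp.smul_single']
  ext ⟨a, b⟩
  simp only [Finsupp.add_apply, Finsupp.single_apply, Prod.mk.injEq, Nat.add_sub_cancel]
  split_ifs <;>
    first
      | omega
      | ring1
      | (rw [qint_succ] <;> ring1)
      | ((obtain rfl : i = 0 := by omega) <;> (simp only [qint_succ, qint_zero] <;> ring1))

/-- The representation of the Weyl algebra on normal-form monomials. -/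
def rho : Weyl R q →ₐ[R] Module.End R (F R) :=
  RingQuot.liftAlgHom R ⟨FreeAlgebra.lift R ![Xop, Dop q], by
    rintro x y ⟨⟩
    simp only [map_mul, map_add, map_smul, map_one, FreeAlgebra.lift_ι_apply,
      Matrix.cons_val_zero, Matrix.cons_val_one, Matrix.head_cons]
    exact rel_end q⟩

lemma rho_x : rho q (Wx R q) = Xop := by
  have h : rho q (Wx R q) = (FreeAlgebra.lift R ![Xop, Dop q]) (FreeAlgebra.ι R 0) :=
    RingQuot.liftAlgHom_mkAlgHom_apply _ _ _ _
  rw [h]; simp [FreeAlgebra.lift_ι_apply]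

lemma rho_d : rho q (Wd R q) = Dop q := by
  have h : rho q (Wd R q) = (FreeAlgebra.lift R ![Xop, Dop q]) (FreeAlgebra.ι R 1) :=
    RingQuot.liftAlgHom_mkAlgHom_apply _ _ _ _
  rw [h]; simp [FreeAlgebra.lift_ι_apply]

/-- Coefficient extraction: apply the representation to the vacuum `e (0,0)`. -/
def coeff : Weyl R q →ₗ[R] F R where
  toFun P := rho q P (Finsupp.single (0, 0) 1)
  map_add' P Q := by simp [map_add]
  map_smul' r P := by simp [map_smul]

/-- The normal-form monomial `x^i δ^j`. -/
def mono (i j : ℕ) : Weyl R q := Wx R q ^ i * Wd R q ^ j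

lemma Dop_pow (j : ℕ) : (Dop q ^ j) (Finsupp.single ((0 : ℕ), (0 : ℕ)) (1 : R)) =
    Finsupp.single (0, j) 1 := by
  induction j with
  | zero => simp
  | succ n ih =>
      rw [pow_succ', Module.End.mul_apply, ih, Dop_single]
      simp [qint_zero]

lemma Xop_pow (i : ℕ) (ab : ℕ × ℕ) (c : R) :
    (Xop ^ i) (Finsupp.single ab c) = Finsupp.single (ab.1 + i, ab.2) c := by
  induction i with
  | zero => simp
  | succ n ih =>
      rw [pow_succ', Module.End.mul_apply, ih, Xop_single]
      simp [add_assoc]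

lemma coeff_smul_mono (c : R) (i j : ℕ) :
    coeff q (c • mono q i j) = Finsupp.single (i, j) c := by
  rw [map_smul]
  have : coeff q (mono q i j) = Finsupp.single (i, j) 1 := by
    show rho q (Wx R q ^ i * Wd R q ^ j) _ = _
    rw [map_mul, map_pow, map_pow, rho_x, rho_d, Module.End.mul_apply, Dop_pow, Xop_pow]
    simp
  rw [this, Finsupp.smul_single, smul_eq_mul, mul_one]

lemma coeff_msum (a : F R) :
    coeff q (a.sum fun ij c => c • mono q ij.1 ij.2) = a := by
  rw [map_finsuppSum]
  exact (Finsupp.sum_congr fun ij _ => coeff_smul_mono q (a ij) ij.1 ij.2).trans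
    (Finsupp.sum_single a)

lemma msum_injective {a b : F R}
    (h : (a.sum fun ij c => c • mono q ij.1 ij.2) = b.sum fun ij c => c • mono q ij.1 ij.2) :
    a = b := by
  have := congrArg (coeff q) h
  rwa [coeff_msum, coeff_msum] at this

/-- The defining relation in the Weyl algebra. -/
lemma WdWx : Wd R q * Wx R q = q • (Wx R q * Wd R q) + 1 := by
  have h := RingQuot.mkAlgHom_rel R (WeylRel.rel (R := R) (q := q))
  simp only [map_mul, map_add, map_smul, map_one] at h
  exact h

lemma qsmul_pow_aux (j : ℕ) :
    qint q j • (Wd R q ^ (j - 1) * Wd R q) = qint q j • Wd R q ^ j := by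
  cases j with
  | zero => simp [qint_zero]
  | succ m => rw [Nat.add_sub_cancel, ← pow_succ]

lemma Wdpow_Wx (j : ℕ) : Wd R q ^ j * Wx R q =
    q ^ j • (Wx R q * Wd R q ^ j) + qint q j • Wd R q ^ (j - 1) := by
  induction j with
  | zero => simp [qint_zero]
  | succ n ih =>
      rw [pow_succ, mul_assoc, WdWx, mul_add, mul_one, mul_smul_comm, ← mul_assoc, ih, add_mul,
        smul_mul_assoc, smul_mul_assoc, mul_assoc, ← pow_succ, qsmul_pow_aux,
        Nat.add_sub_cancel, qint_succ]
      module

lemma mono_mul_x (i j : ℕ) : mono q i j * Wx R q =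
    q ^ j • mono q (i + 1) j + qint q j • mono q i (j - 1) := by
  rw [mono, mul_assoc, Wdpow_Wx, mul_add, mul_smul_comm, mul_smul_comm, ← mul_assoc, ← pow_succ]
  rfl

lemma x_mul_mono (i j : ℕ) : Wx R q * mono q i j = mono q (i + 1) j := by
  rw [mono, mono, ← mul_assoc, ← pow_succ']

lemma mono_mul_d (i j : ℕ) : mono q i j * Wd R q = mono q i (j + 1) := by
  rw [mono, mono, mul_assoc, ← pow_succ]

/-- The span of normal-form monomials. -/
def S : Submodule R (Weyl R q) := Submodule.span R (Set.range fun ij : ℕ × ℕ => mono q ij.1 ij.2)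

lemma mono_mem (i j : ℕ) : mono q i j ∈ S q := Submodule.subset_span ⟨(i, j), rfl⟩

lemma mul_x_mem {s : Weyl R q} (hs : s ∈ S q) : s * Wx R q ∈ S q := by
  induction hs using Submodule.span_induction with
  | mem t ht =>
      obtain ⟨⟨i, j⟩, rfl⟩ := ht
      rw [mono_mul_x]
      exact Submodule.add_mem _ (Submodule.smul_mem _ _ (mono_mem q _ _))
        (Submodule.smul_mem _ _ (mono_mem q _ _))
  | zero => simpa using Submodule.zero_mem (S q)
  | add x y _ _ hx hy => rw [add_mul]; exact Submodule.add_mem _ hx hy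
  | smul r x _ hx => rw [smul_mul_assoc]; exact Submodule.smul_mem _ _ hx

lemma mul_d_mem {s : Weyl R q} (hs : s ∈ S q) : s * Wd R q ∈ S q := by
  induction hs using Submodule.span_induction with
  | mem t ht =>
      obtain ⟨⟨i, j⟩, rfl⟩ := ht
      rw [mono_mul_d]; exact mono_mem q _ _
  | zero => simpa using Submodule.zero_mem (S q)
  | add x y _ _ hx hy => rw [add_mul]; exact Submodule.add_mem _ hx hy
  | smul r x _ hx => rw [smul_mul_assoc]; exact Submodule.smul_mem _ _ hx

lemma mul_xpow_mem {s : Weyl R q} (hs : s ∈ S q) (k : ℕ) : s * Wx R q ^ k ∈ S q := by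
  induction k with
  | zero => simpa using hs
  | succ n ih => rw [pow_succ, ← mul_assoc]; exact mul_x_mem q ih

lemma mul_dpow_mem {s : Weyl R q} (hs : s ∈ S q) (k : ℕ) : s * Wd R q ^ k ∈ S q := by
  induction k with
  | zero => simpa using hs
  | succ n ih => rw [pow_succ, ← mul_assoc]; exact mul_d_mem q ih

lemma mul_mem_S {s t : Weyl R q} (hs : s ∈ S q) (ht : t ∈ S q) : s * t ∈ S q := by
  induction ht using Submodule.span_induction with
  | mem u hu =>
      obtain ⟨⟨i, j⟩, rfl⟩ := hu
      simp only [mono]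
      rw [← mul_assoc]
      exact mul_dpow_mem q (mul_xpow_mem q hs i) j
  | zero => simpa using Submodule.zero_mem (S q)
  | add x y _ _ hx hy => rw [mul_add]; exact Submodule.add_mem _ hx hy
  | smul r x _ hx => rw [mul_smul_comm]; exact Submodule.smul_mem _ _ hx

lemma one_mem_S : (1 : Weyl R q) ∈ S q := by
  have : mono q 0 0 = 1 := by rw [mono]; simp
  rw [← this]; exact mono_mem q 0 0

lemma mem_S (P : Weyl R q) : P ∈ S q := by
  obtain ⟨y, rfl⟩ := RingQuot.mkAlgHom_surjective R (WeylRel R q) P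
  induction y using FreeAlgebra.induction with
  | grade0 r =>
      rw [AlgHom.commutes, Algebra.algebraMap_eq_smul_one]
      exact Submodule.smul_mem _ _ (one_mem_S q)
  | grade1 i =>
      fin_cases i
      · show Wx R q ∈ S q
        have h1 : mono q 1 0 = Wx R q := by rw [mono]; simp
        exact h1 ▸ mono_mem q 1 0
      · show Wd R q ∈ S q
        have h1 : mono q 0 1 = Wd R q := by rw [mono]; simp
        exact h1 ▸ mono_mem q 0 1
  | mul a b ha hb => rw [map_mul]; exact mul_mem_S q ha hb
  | add a b ha hb => rw [map_add]; exact Submodule.add_mem _ ha hb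

lemma exists_rep (P : Weyl R q) :
    ∃ a : F R, P = a.sum fun ij c => c • mono q ij.1 ij.2 := by
  have h := mem_S q P
  rw [S, Finsupp.mem_span_range_iff_exists_finsupp] at h
  obtain ⟨a, ha⟩ := h
  exact ⟨a, ha.symm⟩

lemma pow_eq_one_of_qint {n : ℕ} (h : qint q n = 0) : q ^ n = 1 := by
  have h2 := qint_mul_sub_one q n
  rw [h, zero_mul] at h2
  linear_combination -h2

lemma qint_eq_zero_of_pow {R : Type} [CommRing R] [IsDomain R] {q : R} (hq1 : q ≠ 1) {n : ℕ}
    (h : q ^ n = 1) : qint q n = 0 := by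
  have h2 := qint_mul_sub_one q n
  rw [h, sub_self] at h2
  rcases mul_eq_zero.mp h2 with h3 | h3
  · exact h3
  · exact absurd (by linear_combination h3) hq1

lemma x_comm_mono {i j : ℕ} (h1 : q ^ j = 1) (h0 : qint q j = 0) :
    mono q i j * Wx R q = Wx R q * mono q i j := by
  rw [mono_mul_x, h1, h0, one_smul, zero_smul, add_zero, x_mul_mono]

lemma stmt_term (c : R) (i j : ℕ) :
    algebraMap R (Weyl R q) c * Wx R q ^ i * Wd R q ^ j = c • mono q i j := by
  rw [mono, Algebra.smul_def, ← mul_assoc]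

/-- Normal-form coefficients of the commutator equation `P x = x P`. -/
lemma comm_eq (a : F R)
    (h : (a.sum fun ij c => c • mono q ij.1 ij.2) * Wx R q =
      Wx R q * a.sum fun ij c => c • mono q ij.1 ij.2) :
    (a.sum fun ij c => Finsupp.single (ij.1 + 1, ij.2) (c * q ^ ij.2)) +
        (a.sum fun ij c => Finsupp.single (ij.1, ij.2 - 1) (c * qint q ij.2)) =
      a.sum fun ij c => Finsupp.single (ij.1 + 1, ij.2) c := by
  have hL : (a.sum fun ij c => c • mono q ij.1 ij.2) * Wx R q =
      a.sum fun ij c =>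
        (c * q ^ ij.2) • mono q (ij.1 + 1) ij.2 + (c * qint q ij.2) • mono q ij.1 (ij.2 - 1) := by
    rw [Finsupp.sum_mul]
    exact Finsupp.sum_congr fun ij _ => by
      rw [smul_mul_assoc, mono_mul_x, smul_add, smul_smul, smul_smul]
  have hR : Wx R q * (a.sum fun ij c => c • mono q ij.1 ij.2) =
      a.sum fun ij c => c • mono q (ij.1 + 1) ij.2 := by
    rw [Finsupp.mul_sum]
    exact Finsupp.sum_congr fun ij _ => by rw [mul_smul_comm, x_mul_mono]
  rw [hL, hR] at h
  have h2 := congrArg (coeff q) h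
  rw [map_finsuppSum, map_finsuppSum] at h2
  calc (a.sum fun ij c => Finsupp.single (ij.1 + 1, ij.2) (c * q ^ ij.2)) +
        (a.sum fun ij c => Finsupp.single (ij.1, ij.2 - 1) (c * qint q ij.2))
      = a.sum fun ij c => Finsupp.single (ij.1 + 1, ij.2) (c * q ^ ij.2) +
          Finsupp.single (ij.1, ij.2 - 1) (c * qint q ij.2) := (Finsupp.sum_add).symm
    _ = a.sum fun ij c => coeff q ((c * q ^ ij.2) • mono q (ij.1 + 1) ij.2 +
          (c * qint q ij.2) • mono q ij.1 (ij.2 - 1)) :=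
        (Finsupp.sum_congr fun ij _ => by rw [map_add, coeff_smul_mono, coeff_smul_mono]).symm
    _ = a.sum fun ij c => coeff q (c • mono q (ij.1 + 1) ij.2) := h2
    _ = a.sum fun ij c => Finsupp.single (ij.1 + 1, ij.2) c :=
        Finsupp.sum_congr fun ij _ => by rw [coeff_smul_mono]

lemma sum_ite_point (a : F R) (g : ℕ × ℕ → R → R) (hg : ∀ ij, g ij 0 = 0) (t : ℕ × ℕ) :
    (a.sum fun ij c => if ij = t then g ij c else 0) = g t (a t) := by
  classical
  rw [Finsupp.sum_ite_eq']
  split_ifs with h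
  · rfl
  · rw [Finsupp.notMem_support_iff.mp h, hg]

lemma eval_shift (a : F R) (g : ℕ × ℕ → R → R) (hg : ∀ ij, g ij 0 = 0) (k l : ℕ) :
    (a.sum fun ij c => Finsupp.single (ij.1 + 1, ij.2) (g ij c)) (k + 1, l) =
      g (k, l) (a (k, l)) := by
  rw [Finsupp.sum_apply]
  rw [Finsupp.sum_congr (g2 := fun ij c => if ij = (k, l) then g ij c else 0) ?_]
  · exact sum_ite_point a g hg (k, l)
  · intro ij _
    rw [Finsupp.single_apply]
    by_cases h : ij = (k, l)
    · subst h; simp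
    · rw [if_neg, if_neg h]
      intro hc
      apply h
      obtain ⟨i, j⟩ := ij
      simp only [Prod.mk.injEq] at hc ⊢
      omega

lemma eval_shift_zero (a : F R) (g : ℕ × ℕ → R → R) (l : ℕ) :
    (a.sum fun ij c => Finsupp.single (ij.1 + 1, ij.2) (g ij c)) (0, l) = 0 := by
  rw [Finsupp.sum_apply]
  rw [Finsupp.sum_congr (g2 := fun _ _ => (0 : R)) ?_]
  · exact Finset.sum_const_zero
  · intro ij _
    rw [Finsupp.single_apply, if_neg]
    intro hc
    obtain ⟨i, j⟩ := ij
    simp only [Prod.mk.injEq] at hc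
    omega

lemma eval_lower (a : F R) (k l : ℕ) :
    (a.sum fun ij c => Finsupp.single (ij.1, ij.2 - 1) (c * qint q ij.2)) (k, l) =
      a (k, l + 1) * qint q (l + 1) := by
  rw [Finsupp.sum_apply]
  rw [Finsupp.sum_congr (g2 := fun ij c => if ij = (k, l + 1) then c * qint q ij.2 else 0) ?_]
  · exact sum_ite_point a (fun ij c => c * qint q ij.2) (fun ij => zero_mul _) (k, l + 1)
  · intro ij _
    obtain ⟨i, j⟩ := ij
    dsimp only
    cases j with
    | zero =>
        rw [qint_zero, mul_zero, Finsupp.single_zero, if_neg]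
        · simp
        · simp only [Prod.mk.injEq]; omega
    | succ m =>
        rw [Finsupp.single_apply]
        refine if_congr ?_ rfl rfl
        simp only [Prod.mk.injEq, Nat.succ_sub_one]
        omega

lemma coeffs_vanish (a : F R)
    (h : (a.sum fun ij c => c • mono q ij.1 ij.2) * Wx R q =
      Wx R q * a.sum fun ij c => c • mono q ij.1 ij.2) :
    ∀ k l, a (k, l) * qint q l = 0 := by
  have hsum := comm_eq q a h
  have E0 : ∀ l, a (0, l + 1) * qint q (l + 1) = 0 := by
    intro l
    have he := congrArg (fun f : F R => f (0, l)) hsum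
    simp only [Finsupp.add_apply] at he
    rw [eval_shift_zero a (fun ij c => c * q ^ ij.2), eval_lower q a 0 l,
      eval_shift_zero a (fun _ c => c), zero_add] at he
    exact he
  have ES : ∀ k l, a (k, l) * q ^ l + a (k + 1, l + 1) * qint q (l + 1) = a (k, l) := by
    intro k l
    have he := congrArg (fun f : F R => f (k + 1, l)) hsum
    simp only [Finsupp.add_apply] at he
    rw [eval_shift a (fun ij c => c * q ^ ij.2) (fun ij => zero_mul _) k l,
      eval_lower q a (k + 1) l,
      eval_shift a (fun _ c => c) (fun _ => rfl) k l] at he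
    exact he
  intro k
  induction k with
  | zero =>
      intro l
      cases l with
      | zero => rw [qint_zero, mul_zero]
      | succ m => exact E0 m
  | succ n ih =>
      intro l
      cases l with
      | zero => rw [qint_zero, mul_zero]
      | succ m =>
          have h1 := ES n m
          have h2 := ih m
          have h3 := qint_mul_sub_one q m
          linear_combination h1 - (q - 1) * h2 + a (n, m) * h3

end Stmt16

/-- The centralizer of `R[x]` in `D_q` is `R[x, δ^p]`: an element commutes with `x`
iff it has a (necessarily unique) representation as a polynomial in `x` and `δ^p`. -/
theorem stmt16 (p : ℕ) (hp : p.Prime) (R : Type) [CommRing R] [IsDomain R] [CharZero R]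
    (q : R) (hq : IsPrimitiveRoot q p) (hgen : Algebra.adjoin ℤ ({q} : Set R) = ⊤)
    (P : Weyl R q) :
    P * Wx R q = Wx R q * P ↔
      ∃! a : ℕ × ℕ →₀ R,
        P = a.sum fun ij c =>
          algebraMap R (Weyl R q) c * Wx R q ^ ij.1 * Wd R q ^ (p * ij.2) := by

  classical
  have hq1 : q ≠ 1 := hq.ne_one hp.one_lt
  have hqp : q ^ p = 1 := hq.pow_eq_one
  have hinj : Function.Injective (fun ij : ℕ × ℕ => (ij.1, p * ij.2)) := by
    rintro ⟨i, j⟩ ⟨k, l⟩ h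
    simp only [Prod.mk.injEq] at h ⊢
    exact ⟨h.1, Nat.eq_of_mul_eq_mul_left hp.pos h.2⟩
  let f : ℕ × ℕ ↪ ℕ × ℕ := ⟨fun ij => (ij.1, p * ij.2), hinj⟩
  have hkey : ∀ b : ℕ × ℕ →₀ R,
      (b.sum fun ij c => algebraMap R (Weyl R q) c * Wx R q ^ ij.1 * Wd R q ^ (p * ij.2)) =
        (Finsupp.embDomain f b).sum fun ij c => c • Stmt16.mono q ij.1 ij.2 := by
    intro b
    rw [Finsupp.sum_embDomain]
    exact Finsupp.sum_congr fun ij _ => Stmt16.stmt_term q _ ij.1 (p * ij.2)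
  constructor
  · intro hcomm
    obtain ⟨a, ha⟩ := Stmt16.exists_rep q P
    have hc2 := hcomm
    rw [ha] at hc2
    have hvan := Stmt16.coeffs_vanish q a hc2
    have hdvd : ∀ i j, a (i, j) ≠ 0 → p ∣ j := by
      intro i j h0
      have h1 : qint q j = 0 := by
        rcases mul_eq_zero.mp (hvan i j) with h | h
        · exact absurd h h0
        · exact h
      exact (hq.pow_eq_one_iff_dvd j).mp (Stmt16.pow_eq_one_of_qint q h1)
    have hemb : Finsupp.embDomain f (Finsupp.comapDomain f a f.injective.injOn) = a := by
      ext ij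
      by_cases hr : ij ∈ Set.range f
      · obtain ⟨u, rfl⟩ := hr
        rw [Finsupp.embDomain_apply_self, Finsupp.comapDomain_apply]
      · rw [Finsupp.embDomain_notin_range _ _ _ hr]
        obtain ⟨i, j⟩ := ij
        by_contra hne
        obtain ⟨m, rfl⟩ := hdvd i j fun hh => hne hh.symm
        exact hr ⟨(i, m), rfl⟩
    refine ⟨Finsupp.comapDomain f a f.injective.injOn, ?_, ?_⟩
    · dsimp only
      rw [hkey, hemb]
      exact ha
    · intro b hb
      apply Finsupp.embDomain_injective f
      rw [hemb]
      apply Stmt16.msum_injective q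
      rw [← hkey, ← hb]
      exact ha
  · rintro ⟨a, ha, -⟩
    rw [ha, Finsupp.sum_mul, Finsupp.mul_sum]
    refine Finsupp.sum_congr fun ij _ => ?_
    have h1 : q ^ (p * ij.2) = 1 := by rw [pow_mul, hqp, one_pow]
    have h0 : qint q (p * ij.2) = 0 := Stmt16.qint_eq_zero_of_pow hq1 h1
    rw [Stmt16.stmt_term, smul_mul_assoc, Stmt16.x_comm_mono q h1 h0, mul_smul_comm]
end
end
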